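/- In Morpion Solitaire 5D, no play of length 137 exists; equivalently, the score of every play of Morpion Solitaire 5D is at most 136. -/
import Mathlib


/-- The four directions of Morpion Solitaire. -/
def Dir : Set (ℤ × ℤ) := {(1, 0), (0, 1), (1, 1), (1, -1)}

/-- The line (segment) of length 5 starting at `q` in direction `d`:
the set `{q + t • d : t ∈ {0,1,2,3,4}}`. -/
def seg (q d : ℤ × ℤ) : Set (ℤ × ℤ) := {p | ∃ t : ℕ, t ≤ 4 ∧ p = q + (t : ℤ) • d}

/-- The initial configuration of 36 crosses. -/
def S0 : Set (ℤ × ℤ) := {p |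
  ((p.2 = 0 ∨ p.2 = 9) ∧ 3 ≤ p.1 ∧ p.1 ≤ 6) ∨
  ((p.1 = 0 ∨ p.1 = 9) ∧ 3 ≤ p.2 ∧ p.2 ≤ 6) ∨
  ((p.1 = 3 ∨ p.1 = 6) ∧ ((0 ≤ p.2 ∧ p.2 ≤ 3) ∨ (6 ≤ p.2 ∧ p.2 ≤ 9))) ∨
  ((p.2 = 3 ∨ p.2 = 6) ∧ ((0 ≤ p.1 ∧ p.1 ≤ 3) ∨ (6 ≤ p.1 ∧ p.1 ≤ 9)))}

/-- A play of Morpion Solitaire 5D of length `N`: crosses `p i`, and lines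
`seg (q i) (d i)` in directions `d i ∈ Dir`, subject to the rules of 5D.
(Index `i : Fin N` corresponds to move `i + 1`.) -/
structure Play (N : ℕ) where
  p : Fin N → ℤ × ℤ
  q : Fin N → ℤ × ℤ
  d : Fin N → ℤ × ℤ
  d_mem : ∀ i, d i ∈ Dir
  /-- rule (1): the new cross is placed on an empty point -/
  p_not_S0 : ∀ i, p i ∉ S0
  p_new : ∀ i j : Fin N, j < i → p j ≠ p i
  /-- rule (2): the new line passes through the new cross -/
  p_mem : ∀ i, p i ∈ seg (q i) (d i)
  /-- rule (3): the new line passes only through existing crosses -/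
  seg_sub : ∀ i, seg (q i) (d i) ⊆ S0 ∪ {x | ∃ j : Fin N, j ≤ i ∧ p j = x}
  /-- rule (4): two lines in the same direction are disjoint -/
  disj : ∀ i j : Fin N, j < i → d j = d i → seg (q i) (d i) ∩ seg (q j) (d j) = ∅

/-! ### Auxiliary material -/

/-- The segment as a finset. -/
def segF (q d : ℤ × ℤ) : Finset (ℤ × ℤ) :=
  (Finset.range 5).image (fun t : ℕ => q + (t : ℤ) • d)

lemma segF_subset_seg (q d : ℤ × ℤ) : ↑(segF q d) ⊆ seg q d := by
  intro x hx
  simp only [segF, Finset.coe_image, Set.mem_image, Finset.coe_range, Set.mem_Iio] at hx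
  obtain ⟨t, ht, rfl⟩ := hx
  exact ⟨t, by omega, rfl⟩

lemma seg_subset_segF (q d : ℤ × ℤ) : seg q d ⊆ ↑(segF q d) := by
  rintro x ⟨t, ht, rfl⟩
  simp only [segF, Finset.coe_image, Set.mem_image, Finset.coe_range, Set.mem_Iio]
  exact ⟨t, by omega, rfl⟩

lemma card_segF (q : ℤ × ℤ) {d : ℤ × ℤ} (hd : d ∈ Dir) : (segF q d).card = 5 := by
  rw [segF, Finset.card_image_of_injOn, Finset.card_range]
  intro a ha b hb hab
  have h : (a : ℤ) • d = (b : ℤ) • d := by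
    have := hab
    simpa using this
  simp only [Dir, Set.mem_insert_iff, Set.mem_singleton_iff] at hd
  rcases hd with rfl | rfl | rfl | rfl <;>
  · simp only [Prod.smul_mk, smul_eq_mul, Prod.mk.injEq, mul_one, mul_zero, mul_neg] at h
    omega

/-- The initial configuration as an explicit list of 36 points. -/
def S0L : List (ℤ × ℤ) :=
  [(3,0),(4,0),(5,0),(6,0),(3,9),(4,9),(5,9),(6,9),
   (0,3),(0,4),(0,5),(0,6),(9,3),(9,4),(9,5),(9,6),
   (3,1),(3,2),(3,3),(3,6),(3,7),(3,8),
   (6,1),(6,2),(6,3),(6,6),(6,7),(6,8),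
   (1,3),(2,3),(7,3),(8,3),(1,6),(2,6),(7,6),(8,6)]

def S0F : Finset (ℤ × ℤ) := S0L.toFinset

lemma card_S0F : S0F.card ≤ 36 :=
  le_trans S0L.toFinset_card_le (by norm_num [S0L])

lemma S0_subset_S0F : S0 ⊆ ↑S0F := by
  rintro ⟨a, b⟩ hx
  simp only [S0, Set.mem_setOf_eq] at hx
  have ha : 0 ≤ a ∧ a ≤ 9 := by omega
  have hb : 0 ≤ b ∧ b ≤ 9 := by omega
  rw [Finset.mem_coe]
  obtain ⟨ha1, ha2⟩ := ha
  obtain ⟨hb1, hb2⟩ := hb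
  interval_cases a <;> interval_cases b <;> revert hx <;> decide

/-- No play of length 137 exists. -/
lemma no_play_137 (P : Play 137) : False := by
  classical
  -- the set of all crosses ever on the board
  set big : Finset (ℤ × ℤ) := S0F ∪ Finset.univ.image P.p with hbig
  have hbigcard : big.card ≤ 173 := by
    calc big.card ≤ S0F.card + (Finset.univ.image P.p).card := Finset.card_union_le _ _
    _ ≤ 36 + 137 := by
        gcongr
        · exact card_S0F
        · calc (Finset.univ.image P.p).card ≤ (Finset.univ : Finset (Fin 137)).card :=
              Finset.card_image_le
          _ = 137 := Finset.card_fin 137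
  -- each direction has at most 34 lines
  have key : ∀ d₀ ∈ Dir,
      (Finset.univ.filter (fun i => P.d i = d₀)).card ≤ 34 := by
    intro d₀ hd₀
    set I := Finset.univ.filter (fun i => P.d i = d₀) with hI
    have hdisj : ∀ i ∈ I, ∀ j ∈ I, i ≠ j →
        Disjoint (segF (P.q i) (P.d i)) (segF (P.q j) (P.d j)) := by
      intro i hi j hj hij
      simp only [hI, Finset.mem_filter] at hi hj
      have key2 : ∀ i j : Fin 137, j < i → P.d i = d₀ → P.d j = d₀ →
          Disjoint (segF (P.q i) (P.d i)) (segF (P.q j) (P.d j)) := by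
        intro i j hlt h1 h2
        rw [Finset.disjoint_left]
        intro x hxi hxj
        have := P.disj i j hlt (h2.trans h1.symm)
        have hx : x ∈ seg (P.q i) (P.d i) ∩ seg (P.q j) (P.d j) :=
          ⟨segF_subset_seg _ _ hxi, segF_subset_seg _ _ hxj⟩
        rw [this] at hx
        exact hx
      rcases lt_or_gt_of_ne hij with h | h
      · exact (key2 j i h hj.2 hi.2).symm
      · exact key2 i j h hi.2 hj.2
    have hsub : I.biUnion (fun i => segF (P.q i) (P.d i)) ⊆ big := by
      intro x hx
      simp only [Finset.mem_biUnion] at hx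
      obtain ⟨i, hi, hxi⟩ := hx
      have := P.seg_sub i (segF_subset_seg _ _ hxi)
      rcases this with h | ⟨j, _, rfl⟩
      · exact Finset.mem_union_left _ (S0_subset_S0F h)
      · exact Finset.mem_union_right _ (Finset.mem_image_of_mem _ (Finset.mem_univ j))
    have hcard : (I.biUnion (fun i => segF (P.q i) (P.d i))).card = 5 * I.card := by
      rw [Finset.card_biUnion hdisj]
      rw [Finset.sum_congr rfl (fun i hi => card_segF (P.q i) (P.d_mem i))]
      simp [mul_comm]
    have : 5 * I.card ≤ 173 := by
      rw [← hcard]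
      exact le_trans (Finset.card_le_card hsub) hbigcard
    omega
  -- every index has one of four directions
  have hcover : (Finset.univ : Finset (Fin 137)) ⊆
      (Finset.univ.filter (fun i => P.d i = (1,0))) ∪
      (Finset.univ.filter (fun i => P.d i = (0,1))) ∪
      (Finset.univ.filter (fun i => P.d i = (1,1))) ∪
      (Finset.univ.filter (fun i => P.d i = (1,-1))) := by
    intro i _
    have := P.d_mem i
    simp only [Dir, Set.mem_insert_iff, Set.mem_singleton_iff] at this
    simp only [Finset.mem_union, Finset.mem_filter, Finset.mem_univ, true_and]
    rcases this with h|h|h|h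
    · exact Or.inl (Or.inl (Or.inl h))
    · exact Or.inl (Or.inl (Or.inr h))
    · exact Or.inl (Or.inr h)
    · exact Or.inr h
  have h137 : (137 : ℕ) ≤ 136 := by
    have h1 := key (1,0) (by simp [Dir])
    have h2 := key (0,1) (by simp [Dir])
    have h3 := key (1,1) (by simp [Dir])
    have h4 := key (1,-1) (by simp [Dir])
    calc (137 : ℕ) = (Finset.univ : Finset (Fin 137)).card := (Finset.card_fin 137).symm
    _ ≤ _ := Finset.card_le_card hcover
    _ ≤ _ := Finset.card_union_le _ _
    _ ≤ ((Finset.univ.filter (fun i => P.d i = (1,0))) ∪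
          (Finset.univ.filter (fun i => P.d i = (0,1))) ∪
          (Finset.univ.filter (fun i => P.d i = (1,1)))).card + 34 := by gcongr
    _ ≤ ((Finset.univ.filter (fun i => P.d i = (1,0))) ∪
          (Finset.univ.filter (fun i => P.d i = (0,1)))).card + 34 + 34 := by
        have := Finset.card_union_le (Finset.univ.filter (fun i => P.d i = (1,0)) ∪
          Finset.univ.filter (fun i => P.d i = (0,1)))
          (Finset.univ.filter (fun i => P.d i = (1,1)))
        omega
    _ ≤ (34 + 34) + 34 + 34 := by
        have := Finset.card_union_le (Finset.univ.filter (fun i => P.d i = (1,0)))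
          (Finset.univ.filter (fun i => P.d i = (0,1)))
        omega
    _ = 136 := by norm_num
  omega

/-- A play can be truncated to any shorter length. -/
def Play.truncate {N M : ℕ} (h : M ≤ N) (P : Play N) : Play M where
  p i := P.p (Fin.castLE h i)
  q i := P.q (Fin.castLE h i)
  d i := P.d (Fin.castLE h i)
  d_mem i := P.d_mem _
  p_not_S0 i := P.p_not_S0 _
  p_new i j hlt := P.p_new _ _ (by simpa using hlt)
  p_mem i := P.p_mem _
  seg_sub i := by
    intro x hx
    rcases P.seg_sub (Fin.castLE h i) hx with h1 | ⟨j, hj, rfl⟩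
    · exact Or.inl h1
    · refine Or.inr ⟨⟨j.val, ?_⟩, ?_, ?_⟩
      · have : j.val ≤ i.val := hj
        omega
      · exact hj
      · congr 1
  disj i j hlt hd := P.disj _ _ (by simpa using hlt) hd

/-- In Morpion Solitaire 5D, the score of every play is at most 136;
equivalently, no play of length 137 exists. -/
theorem morpion5D_upper_bound_136 : ∀ N : ℕ, Play N → N ≤ 136 := by
  intro N P
  by_contra h
  push_neg at h
  exact no_play_137 (P.truncate (by omega : 137 ≤ N))
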